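/- For real Δ > 0, real r₀ > 0, and real t, θ with 0 < θ < 2π and |t| < θ, the series ∑_{k∈ℤ} [e^{r₀(θ+2πk)} + e^{−r₀(θ+2πk)} − e^{r₀ t} − e^{−r₀ t}]^{−Δ} converges absolutely, and its sum is invariant under θ ↦ 2π − θ together with summation reindexing (i.e., the BTZ boundary propagator is symmetric about θ = π at fixed t = 0). -/

import Mathlib

open Real

/-- Key summability lemma: for `|t| < s`, the one-sided series is summable. -/
lemma btz_aux_summable (Δ r₀ t s : ℝ) (hΔ : 0 < Δ) (hr : 0 < r₀) (ht : |t| < s) :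
    Summable (fun n : ℕ =>
      |(Real.exp (r₀ * (s + 2 * Real.pi * n)) + Real.exp (-(r₀ * (s + 2 * Real.pi * n)))
          - Real.exp (r₀ * t) - Real.exp (-(r₀ * t))) ^ (-Δ)|) := by
  have hs : 0 < s := lt_of_le_of_lt (abs_nonneg t) ht
  set C : ℝ := Real.cosh (r₀ * s) - Real.cosh (r₀ * t) with hC
  have hCpos : 0 < C := by
    have : Real.cosh (r₀ * t) < Real.cosh (r₀ * s) := by
      rw [Real.cosh_lt_cosh]
      rw [abs_mul, abs_mul, abs_of_pos hr]
      have : |s| = s := abs_of_pos hs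
      rw [this]
      exact mul_lt_mul_of_pos_left ht hr
    linarith
  -- lower bound on the base
  have hbase : ∀ n : ℕ, C * Real.exp (2 * Real.pi * r₀ * n) ≤
      Real.exp (r₀ * (s + 2 * Real.pi * n)) + Real.exp (-(r₀ * (s + 2 * Real.pi * n)))
        - Real.exp (r₀ * t) - Real.exp (-(r₀ * t)) := by
    intro n
    have hm : (0:ℝ) ≤ 2 * Real.pi * r₀ * n := by positivity
    have e1 : Real.exp (r₀ * (s + 2 * Real.pi * n)) + Real.exp (-(r₀ * (s + 2 * Real.pi * n)))
        = 2 * Real.cosh (r₀ * s + 2 * Real.pi * r₀ * n) := by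
      rw [Real.cosh_eq]; ring_nf
    have e2 : Real.exp (r₀ * t) + Real.exp (-(r₀ * t)) = 2 * Real.cosh (r₀ * t) := by
      rw [Real.cosh_eq]; ring
    have hadd := Real.cosh_add (r₀ * s) (2 * Real.pi * r₀ * n)
    have hs1 : 0 ≤ Real.sinh (r₀ * s) := Real.sinh_nonneg_iff.mpr (by positivity)
    have hs2 : 0 ≤ Real.sinh (2 * Real.pi * r₀ * n) := Real.sinh_nonneg_iff.mpr hm
    have hc1 : 1 ≤ Real.cosh (2 * Real.pi * r₀ * n) := Real.one_le_cosh _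
    have hc2 : Real.exp (2 * Real.pi * r₀ * n) ≤ 2 * Real.cosh (2 * Real.pi * r₀ * n) := by
      rw [Real.cosh_eq]
      have := (Real.exp_pos (-(2 * Real.pi * r₀ * n))).le
      linarith
    have hct : 1 ≤ Real.cosh (r₀ * t) := Real.one_le_cosh _
    have key : 2 * C * Real.cosh (2 * Real.pi * r₀ * n) ≤
        2 * Real.cosh (r₀ * s + 2 * Real.pi * r₀ * n) - 2 * Real.cosh (r₀ * t) := by
      rw [hadd]
      nlinarith [mul_nonneg hs1 hs2]
    have : C * Real.exp (2 * Real.pi * r₀ * n) ≤ 2 * C * Real.cosh (2 * Real.pi * r₀ * n) := by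
      nlinarith
    rw [e1]
    linarith [e2, this, key]
  -- comparison with geometric series
  have hgeo : Summable (fun n : ℕ => C ^ (-Δ) * Real.exp (-(2 * Real.pi * r₀ * Δ)) ^ n) := by
    apply Summable.mul_left
    apply summable_geometric_of_lt_one (Real.exp_pos _).le
    rw [Real.exp_lt_one_iff]
    have : 0 < 2 * Real.pi * r₀ * Δ := by positivity
    linarith
  apply Summable.of_nonneg_of_le (fun n => abs_nonneg _) _ hgeo
  intro n
  have hpos : 0 < Real.exp (r₀ * (s + 2 * Real.pi * n)) + Real.exp (-(r₀ * (s + 2 * Real.pi * n)))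
      - Real.exp (r₀ * t) - Real.exp (-(r₀ * t)) :=
    lt_of_lt_of_le (by positivity) (hbase n)
  rw [abs_of_nonneg (Real.rpow_nonneg hpos.le _)]
  calc (Real.exp (r₀ * (s + 2 * Real.pi * n)) + Real.exp (-(r₀ * (s + 2 * Real.pi * n)))
      - Real.exp (r₀ * t) - Real.exp (-(r₀ * t))) ^ (-Δ)
      ≤ (C * Real.exp (2 * Real.pi * r₀ * n)) ^ (-Δ) := by
        apply Real.rpow_le_rpow_of_nonpos (by positivity) (hbase n) (by linarith)
    _ = C ^ (-Δ) * Real.exp (-(2 * Real.pi * r₀ * Δ)) ^ n := by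
        rw [Real.mul_rpow hCpos.le (Real.exp_pos _).le]
        congr 1
        rw [← Real.exp_mul, ← Real.exp_nat_mul]
        ring_nf


/-- evenness of `exp x + exp (-x)`. -/
lemma btz_exp_even (a b : ℝ) (h : a = -b) :
    Real.exp a + Real.exp (-a) = Real.exp b + Real.exp (-b) := by
  subst h; rw [neg_neg]; exact add_comm _ _

theorem btz_images_summable_symmetric (Δ r₀ t θ : ℝ) (hΔ : 0 < Δ) (hr : 0 < r₀)
    (hθ0 : 0 < θ) (hθ2 : θ < 2 * Real.pi) (ht : |t| < θ) :
    Summable (fun k : ℤ =>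
      |(Real.exp (r₀ * (θ + 2 * Real.pi * k)) + Real.exp (-(r₀ * (θ + 2 * Real.pi * k)))
          - Real.exp (r₀ * t) - Real.exp (-(r₀ * t))) ^ (-Δ)|) ∧
    (∑' k : ℤ,
        (Real.exp (r₀ * (θ + 2 * Real.pi * k)) + Real.exp (-(r₀ * (θ + 2 * Real.pi * k)))
          - Real.exp (r₀ * t) - Real.exp (-(r₀ * t))) ^ (-Δ)) =
    (∑' k : ℤ,
        (Real.exp (r₀ * ((2 * Real.pi - θ) + 2 * Real.pi * k)) +
            Real.exp (-(r₀ * ((2 * Real.pi - θ) + 2 * Real.pi * k)))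
          - Real.exp (r₀ * t) - Real.exp (-(r₀ * t))) ^ (-Δ)) := by
  have hpi := Real.pi_pos
  constructor
  · -- Summability
    apply Summable.of_nat_of_neg_add_one
    · -- positive side
      have := btz_aux_summable Δ r₀ t θ hΔ hr ht
      convert this using 2 with n
      simp only [Int.cast_natCast]
    · -- negative side: shift by one more, use s = 4π - θ for n ≥ 1 and handle n = 0 separately
      rw [← summable_nat_add_iff 1]
      have h4 : |t| < 4 * Real.pi - θ := by linarith
      have := btz_aux_summable Δ r₀ t (4 * Real.pi - θ) hΔ hr h4
      convert this using 2 with n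
      congr 1
      congr 1
      congr 1
      have h2 := btz_exp_even (r₀ * (θ + 2 * Real.pi * ((-((n:ℕ)+1+1 : ℤ)) : ℝ)))
        (r₀ * ((4 * Real.pi - θ) + 2 * Real.pi * n)) (by push_cast; ring)
      push_cast at h2 ⊢
      linarith
  · -- Symmetry under θ ↦ 2π - θ via reindexing k ↦ -(k+1)
    have hinv : Function.Involutive (fun k : ℤ => -(k + 1)) := by
      intro k; ring
    rw [← Equiv.tsum_eq (hinv.toPerm _)
      (fun k : ℤ => (Real.exp (r₀ * (θ + 2 * Real.pi * k)) + Real.exp (-(r₀ * (θ + 2 * Real.pi * k)))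
          - Real.exp (r₀ * t) - Real.exp (-(r₀ * t))) ^ (-Δ))]
    apply tsum_congr
    intro k
    simp only [Function.Involutive.coe_toPerm]
    congr 1
    have h2 := btz_exp_even (r₀ * (θ + 2 * Real.pi * ((-(k + 1) : ℤ) : ℝ)))
      (r₀ * ((2 * Real.pi - θ) + 2 * Real.pi * k)) (by push_cast; ring)
    push_cast at h2 ⊢
    linarith
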